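/- arXiv:2108.02768 — 2 statements merged into one kernel-verified Lean document; each statement's English description precedes it below -/
import Mathlib

section
/- The Weisfeiler-Lehman graph isomorphism test is complete on complete colored graphs: it decides two finite complete colored graphs as isomorphic if and only if they are actually isomorphic. -/
lemma subtype_ne_univ_val_map {V : Type*} [Fintype V] [DecidableEq V] (v : V) :
    (Finset.univ : Finset {x : V // x ≠ v}).val.map Subtype.val =
      ((Finset.univ : Finset V).val.erase v) := by
  rw [← Finset.erase_val, ← Finset.filter_ne', ← Finset.univ_map_subtype, Finset.map_val]
  rfl

lemma exists_color_equiv (n : ℕ) :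
    ∀ {V : Type u} {W : Type v} {C : Type w} [Fintype V] [Fintype W] [DecidableEq V] [DecidableEq W]
      (f : V → C) (g : W → C), Fintype.card V = n →
      Finset.univ.val.map f = Finset.univ.val.map g →
      ∃ e : V ≃ W, ∀ v, g (e v) = f v := by
  induction n with
  | zero =>
    intro V W C _ _ _ _ f g hcard h
    have hV : IsEmpty V := Fintype.card_eq_zero_iff.mp hcard
    have hWcard : Fintype.card W = 0 := by
      have h2 := congrArg Multiset.card h
      simp only [Multiset.card_map] at h2
      have h3 : Fintype.card V = Fintype.card W := h2
      omega
    have hW : IsEmpty W := Fintype.card_eq_zero_iff.mp hWcard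
    exact ⟨Equiv.equivOfIsEmpty V W, fun v => hV.elim v⟩
  | succ n ih =>
    intro V W C _ _ _ _ f g hcard h
    classical
    have hne : Nonempty V := Fintype.card_pos_iff.mp (by omega)
    obtain ⟨v⟩ := hne
    have hfv : f v ∈ Finset.univ.val.map g := by
      rw [← h]; exact Multiset.mem_map_of_mem f (Finset.mem_univ_val v)
    obtain ⟨w, _, hw⟩ := Multiset.mem_map.mp hfv
    -- restricted multiset equality
    have hVmap : (Finset.univ : Finset {x : V // x ≠ v}).val.map (fun x => f x.val) =
        (Finset.univ.val.map f).erase (f v) := by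
      have h2 := congrArg (Multiset.map f) (subtype_ne_univ_val_map v)
      rw [Multiset.map_map, Multiset.map_erase_of_mem f _ (Finset.mem_univ_val v)] at h2
      exact h2
    have hWmap : (Finset.univ : Finset {y : W // y ≠ w}).val.map (fun y => g y.val) =
        (Finset.univ.val.map g).erase (g w) := by
      have h2 := congrArg (Multiset.map g) (subtype_ne_univ_val_map w)
      rw [Multiset.map_map, Multiset.map_erase_of_mem g _ (Finset.mem_univ_val w)] at h2
      exact h2
    have hcard' : Fintype.card {x : V // x ≠ v} = n := by
      simp [Fintype.card_subtype_compl, hcard]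
    have hrest : (Finset.univ : Finset {x : V // x ≠ v}).val.map (fun x => f x.val) =
        (Finset.univ : Finset {y : W // y ≠ w}).val.map (fun y => g y.val) := by
      rw [hVmap, hWmap, h, hw]
    obtain ⟨e', he'⟩ := ih (fun x : {x : V // x ≠ v} => f x.val)
      (fun y : {y : W // y ≠ w} => g y.val) hcard' hrest
    refine ⟨⟨fun x => if h : x = v then w else (e' ⟨x, h⟩).val,
      fun y => if h : y = w then v else (e'.symm ⟨y, h⟩).val, ?_, ?_⟩, ?_⟩
    · intro x
      by_cases hx : x = v
      · simp [hx]
      · dsimp only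
        rw [dif_neg hx, dif_neg (e' ⟨x, hx⟩).property]
        simp [Subtype.coe_eta]
    · intro y
      by_cases hy : y = w
      · simp [hy]
      · dsimp only
        rw [dif_neg hy, dif_neg (e'.symm ⟨y, hy⟩).property]
        simp [Subtype.coe_eta]
    · intro x
      by_cases hx : x = v
      · simp [hx, hw]
      · dsimp only [Equiv.coe_fn_mk]
        rw [dif_neg hx]
        exact he' ⟨x, hx⟩

/-- Completeness of the Weisfeiler-Lehman test on complete colored graphs:
the WL test (comparing the multisets of one-step refined vertex colors,
where a refined color is the pair of a vertex's own color and the multiset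
of its neighbors' colors) decides two finite complete colored graphs as
isomorphic iff they are actually isomorphic as colored graphs. -/
theorem wl_test_complete_on_complete_colored_graphs
    {V W C : Type*} [Fintype V] [Fintype W] [DecidableEq V] [DecidableEq W]
    (G : SimpleGraph V) (H : SimpleGraph W)
    [DecidableRel G.Adj] [DecidableRel H.Adj]
    (hG : ∀ u v : V, u ≠ v → G.Adj u v)
    (hH : ∀ u v : W, u ≠ v → H.Adj u v)
    (cG : V → C) (cH : W → C) :
    (Finset.univ.val.map
        (fun v : V => ((cG v),
          (Finset.univ.filter (fun u => G.Adj v u)).val.map cG)) =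
      Finset.univ.val.map
        (fun w : W => ((cH w),
          (Finset.univ.filter (fun u => H.Adj w u)).val.map cH))) ↔
      (∃ e : V ≃ W, (∀ u v : V, G.Adj u v ↔ H.Adj (e u) (e v)) ∧
        ∀ v : V, cH (e v) = cG v) := by
  have hGfilter : ∀ v : V, Finset.univ.filter (fun u => G.Adj v u) = Finset.univ.erase v := by
    intro v
    ext u
    simp only [Finset.mem_filter, Finset.mem_univ, true_and, Finset.mem_erase, and_true]
    constructor
    · exact fun h => h.ne'
    · exact fun h => hG v u (Ne.symm h)
  have hHfilter : ∀ w : W, Finset.univ.filter (fun u => H.Adj w u) = Finset.univ.erase w := by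
    intro w
    ext u
    simp only [Finset.mem_filter, Finset.mem_univ, true_and, Finset.mem_erase, and_true]
    constructor
    · exact fun h => h.ne'
    · exact fun h => hH w u (Ne.symm h)
  constructor
  · intro h
    -- project to first components
    have h1 : Finset.univ.val.map cG = Finset.univ.val.map cH := by
      have := congrArg (Multiset.map Prod.fst) h
      simpa [Multiset.map_map, Function.comp] using this
    obtain ⟨e, he⟩ := exists_color_equiv (Fintype.card V) cG cH rfl h1
    refine ⟨e, fun u v => ?_, he⟩
    constructor
    · intro hadj
      exact hH (e u) (e v) (fun heq => G.ne_of_adj hadj (e.injective heq))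
    · intro hadj
      exact hG u v (fun heq => H.ne_of_adj hadj (by rw [heq]))
  · rintro ⟨e, hadj, hc⟩
    have huniv : (Finset.univ : Finset W).val = Finset.univ.val.map e := by
      have := Finset.univ_map_equiv_to_embedding e
      have := congrArg Finset.val this
      simp only [Finset.map_val, Equiv.coe_toEmbedding] at this
      exact this.symm
    rw [huniv, Multiset.map_map]
    apply Multiset.map_congr rfl
    intro v _
    simp only [Function.comp_apply]
    refine Prod.ext (by simp [hc v]) ?_
    rw [hGfilter, hHfilter]
    have h1 : ((Finset.univ : Finset W).erase (e v)).val =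
        Multiset.map e ((Finset.univ : Finset V).erase v).val := by
      rw [Finset.erase_val, Finset.erase_val, huniv,
        Multiset.map_erase e e.injective]
    rw [h1, Multiset.map_map]
    apply Multiset.map_congr rfl
    intro u _
    exact (hc u).symm
end

section
/- Every permutation-invariant function f : X^n → ℝ on tuples from a countable domain X admits a DeepSets decomposition: there exist φ : X → ℝ and ρ : ℝ → ℝ such that f(x) = ρ(∑ i φ(x_i)) for all x. -/
/-- Uniqueness of base-`B` digits. -/
private lemma digits_unique (B : ℕ) : ∀ (m : ℕ) (a b : ℕ → ℕ),
    (∀ k, a k < B) → (∀ k, b k < B) →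
    (∑ k ∈ Finset.range m, a k * B ^ k) = (∑ k ∈ Finset.range m, b k * B ^ k) →
    ∀ k < m, a k = b k := by
  intro m
  induction m with
  | zero => intro a b _ _ _ k hk; omega
  | succ m ih =>
    intro a b ha hb hsum k hk
    rw [Finset.sum_range_succ', Finset.sum_range_succ'] at hsum
    simp only [pow_zero, mul_one, pow_succ] at hsum
    have hfac : ∀ c : ℕ → ℕ, (∑ k ∈ Finset.range m, c (k+1) * (B ^ k * B))
        = B * ∑ k ∈ Finset.range m, c (k+1) * B ^ k := by
      intro c
      rw [Finset.mul_sum]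
      exact Finset.sum_congr rfl fun i _ => by ring
    rw [hfac a, hfac b] at hsum
    have h0 : a 0 = b 0 := by
      have := congrArg (· % B) hsum
      simpa [Nat.mul_add_mod, Nat.mod_eq_of_lt (ha 0), Nat.mod_eq_of_lt (hb 0)] using this
    have hB : 0 < B := Nat.lt_of_le_of_lt (Nat.zero_le _) (ha 0)
    have hrest : (∑ k ∈ Finset.range m, a (k+1) * B ^ k)
        = ∑ k ∈ Finset.range m, b (k+1) * B ^ k := by
      have : B * (∑ k ∈ Finset.range m, a (k+1) * B ^ k)
          = B * ∑ k ∈ Finset.range m, b (k+1) * B ^ k := by omega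
      exact Nat.eq_of_mul_eq_mul_left hB this
    rcases Nat.eq_zero_or_pos k with rfl | hkpos
    · exact h0
    · obtain ⟨j, rfl⟩ := Nat.exists_eq_add_of_le hkpos
      have := ih (fun k => a (k+1)) (fun k => b (k+1)) (fun k => ha _) (fun k => hb _)
        hrest j (by omega)
      simpa [Nat.add_comm] using this

/-- Multisets of naturals of card `≤ n` are determined by `∑ (n+1)^e`. -/
private lemma multiset_powsum_inj (n : ℕ) (S T : Multiset ℕ)
    (hS : S.card ≤ n) (hT : T.card ≤ n)
    (h : (S.map (fun e => (n+1) ^ e)).sum = (T.map (fun e => (n+1) ^ e)).sum) :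
    S = T := by
  classical
  set m : ℕ := (S.sup ⊔ T.sup) + 1 with hm
  have hSm : ∀ e ∈ S, e < m := fun e he =>
    lt_of_le_of_lt (le_trans (Multiset.le_sup he) le_sup_left) (Nat.lt_succ_self _)
  have hTm : ∀ e ∈ T, e < m := fun e he =>
    lt_of_le_of_lt (le_trans (Multiset.le_sup he) le_sup_right) (Nat.lt_succ_self _)
  have key : ∀ (U : Multiset ℕ), (∀ e ∈ U, e < m) →
      (U.map (fun e => (n+1) ^ e)).sum
        = ∑ k ∈ Finset.range m, U.count k * (n+1) ^ k := by
    intro U hU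
    rw [Finset.sum_multiset_map_count]
    refine Finset.sum_subset ?_ ?_
    · intro a ha
      rw [Finset.mem_range]
      exact hU a (Multiset.mem_toFinset.mp ha)
    · intro a _ ha
      simp [Multiset.count_eq_zero_of_notMem (fun hmem => ha (Multiset.mem_toFinset.mpr hmem))]
  rw [key S hSm, key T hTm] at h
  have hcount : ∀ k < m, S.count k = T.count k := by
    refine digits_unique (n+1) m _ _ ?_ ?_ (by simpa [smul_eq_mul] using h)
    · intro k; exact Nat.lt_succ_of_le (le_trans (Multiset.count_le_card k S) hS)
    · intro k; exact Nat.lt_succ_of_le (le_trans (Multiset.count_le_card k T) hT)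
  ext k
  rcases lt_or_ge k m with hk | hk
  · exact hcount k hk
  · rw [Multiset.count_eq_zero_of_notMem (fun hmem => absurd (hSm k hmem) (not_lt.mpr hk)),
      Multiset.count_eq_zero_of_notMem (fun hmem => absurd (hTm k hmem) (not_lt.mpr hk))]

/-- Tuples with permutation-equivalent entry lists differ by a permutation. -/
private lemma exists_perm_of_ofFn_perm : ∀ {n : ℕ} {α : Type*} (x y : Fin n → α),
    (List.ofFn x).Perm (List.ofFn y) → ∃ σ : Equiv.Perm (Fin n), x = y ∘ σ := by
  intro n
  induction n with
  | zero => intro α x y _; exact ⟨Equiv.refl _, funext fun i => i.elim0⟩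
  | succ n ih =>
    intro α x y h
    have hx0 : x 0 ∈ List.ofFn y := h.mem_iff.mp (by simp [List.mem_ofFn])
    rw [List.mem_ofFn] at hx0
    obtain ⟨j, hj⟩ := hx0
    set y' : Fin (n+1) → α := y ∘ (Equiv.swap 0 j) with hy'
    have hperm : (List.ofFn x).Perm (List.ofFn y') :=
      h.trans (Equiv.Perm.ofFn_comp_perm (Equiv.swap 0 j) y).symm
    have hy'0 : y' 0 = x 0 := by simp [hy', hj]
    rw [List.ofFn_succ, List.ofFn_succ, hy'0] at hperm
    have htail := hperm.cons_inv
    obtain ⟨τ, hτ⟩ := ih (fun i => x i.succ) (fun i => y' i.succ) htail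
    refine ⟨(Equiv.Perm.decomposeFin.symm (0, τ)).trans (Equiv.swap 0 j), ?_⟩
    funext i
    refine Fin.cases ?_ (fun k => ?_) i
    · simp [Equiv.trans_apply, hj]
    · have h1 : Equiv.Perm.decomposeFin.symm (0, τ) k.succ = (τ k).succ := by
        simp
      have h2 := congrFun hτ k
      simp only [Function.comp_apply] at h2 ⊢
      rw [Equiv.trans_apply, h1]
      rw [h2]
      simp [hy']

/-- Sum-decomposition (DeepSets) theorem for countable domains: every
permutation-invariant function `f : Xⁿ → ℝ` can be written as
`f x = ρ (∑ i, φ (x i))` for some `φ : X → ℝ` and `ρ : ℝ → ℝ`. -/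
theorem deepsets_decomposition {X : Type*} [Countable X] {n : ℕ}
    (f : (Fin n → X) → ℝ)
    (hf : ∀ (σ : Equiv.Perm (Fin n)) (x : Fin n → X), f (x ∘ σ) = f x) :
    ∃ (φ : X → ℝ) (ρ : ℝ → ℝ), ∀ x : Fin n → X, f x = ρ (∑ i, φ (x i)) := by
  classical
  obtain ⟨c, hc⟩ := Countable.exists_injective_nat X
  set φ : X → ℝ := fun a => (((n+1) ^ c a : ℕ) : ℝ) with hφ
  have hconst : ∀ x y : Fin n → X, (∑ i, φ (x i)) = (∑ i, φ (y i)) → f x = f y := by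
    intro x y hxy
    have hnat : (∑ i, (n+1) ^ c (x i)) = ∑ i, (n+1) ^ c (y i) := by
      have : ((∑ i, (n+1) ^ c (x i) : ℕ) : ℝ) = ((∑ i, (n+1) ^ c (y i) : ℕ) : ℝ) := by
        push_cast
        simpa [hφ] using hxy
      exact_mod_cast this
    -- multiset equality of encodings
    set S : Multiset ℕ := Multiset.map (fun i => c (x i)) Finset.univ.val with hS
    set T : Multiset ℕ := Multiset.map (fun i => c (y i)) Finset.univ.val with hT
    have hsumS : (S.map (fun e => (n+1) ^ e)).sum = ∑ i, (n+1) ^ c (x i) := by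
      rw [hS, Multiset.map_map]
      rfl
    have hsumT : (T.map (fun e => (n+1) ^ e)).sum = ∑ i, (n+1) ^ c (y i) := by
      rw [hT, Multiset.map_map]
      rfl
    have hST : S = T := by
      refine multiset_powsum_inj n S T ?_ ?_ (by rw [hsumS, hsumT]; exact hnat)
      · simp [hS]
      · simp [hT]
    have hmx : Multiset.map x Finset.univ.val = Multiset.map y Finset.univ.val := by
      apply Multiset.map_injective hc
      rw [Multiset.map_map, Multiset.map_map]
      exact hST
    have hperm : (List.ofFn x).Perm (List.ofFn y) := by
      rw [← Multiset.coe_eq_coe]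
      rw [← Fin.univ_val_map, ← Fin.univ_val_map]
      exact hmx
    obtain ⟨σ, hσ⟩ := exists_perm_of_ofFn_perm x y hperm
    rw [hσ]
    exact hf σ y
  refine ⟨φ, fun t => if h : ∃ x : Fin n → X, (∑ i, φ (x i)) = t then f h.choose else 0,
    fun x => ?_⟩
  have hex : ∃ z : Fin n → X, (∑ i, φ (z i)) = ∑ i, φ (x i) := ⟨x, rfl⟩
  simp only [dif_pos hex]
  exact (hconst hex.choose x hex.choose_spec).symm
end
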